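/- Let 𝓘 ⊆ 𝒫(V) be nonempty and suppose 𝓘^⊥ is nonempty, where 𝓘^⊥ := {J ⊆ V : J ⊈ I for every I ∈ 𝓘, and every proper subset J' ⊊ J satisfies J' ⊆ I for some I ∈ 𝓘} (note 𝓘^⊥ is an antichain of nonempty subsets of V). If f : X → ℝ is bounded and measurable and ‖E[f | 𝒞_𝓘]‖_{L²(μ)} > 0, then ‖f‖_{U^{V,𝓘^⊥}} > 0. -/

import Mathlib

open MeasureTheory
open scoped Classical

noncomputable section

/-- Recombine `(x_{V∖J}, x_J^ω)` into a point of `X = ∏_v X_v`. -/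
def recomb {V : Type} (X : V → Type) (J : Set V)
    (y : ∀ v : ↥(Jᶜ : Set V), X ↑v) (z : ∀ p : ↥J × Bool, X ↑p.1)
    (ω : ↥J → Bool) : ∀ v, X v := fun v =>
  if h : v ∈ J then z (⟨v, h⟩, ω ⟨v, h⟩) else y ⟨v, h⟩

/-- The integral `∫_{X⁺_J} ∏_{ω ∈ {0,1}^J} f(x_{V∖J}, x_J^ω) dμ⁺_J`. -/
def UJint {V : Type} [Fintype V] [DecidableEq V] (X : V → Type)
    [∀ v, MeasurableSpace (X v)] (μ : ∀ v, Measure (X v)) (J : Set V)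
    (f : (∀ v, X v) → ℝ) : ℝ :=
  ∫ p : (∀ v : ↥(Jᶜ : Set V), X ↑v) × (∀ q : ↥J × Bool, X ↑q.1),
    ∏ ω : ↥J → Bool, f (recomb X J p.1 p.2 ω)
    ∂((Measure.pi fun v : ↥(Jᶜ : Set V) => μ ↑v).prod
      (Measure.pi fun q : ↥J × Bool => μ ↑q.1))

/-- The seminorm `‖f‖_{U^{V,J}} = (UJint f)^{1/2^{|J|}}`. -/
def UJnorm {V : Type} [Fintype V] [DecidableEq V] (X : V → Type)
    [∀ v, MeasurableSpace (X v)] (μ : ∀ v, Measure (X v)) (J : Set V)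
    (f : (∀ v, X v) → ℝ) : ℝ :=
  (UJint X μ J f) ^ ((1 : ℝ) / 2 ^ J.ncard)

/-- The seminorm `‖f‖_{U^{V,𝓙}}`, an infimum over decompositions `f = Σ_i f_i` into
bounded measurable pieces. -/
def UFamNorm {V : Type} [Fintype V] [DecidableEq V] (X : V → Type)
    [∀ v, MeasurableSpace (X v)] (μ : ∀ v, Measure (X v)) (𝓙 : Finset (Set V))
    (f : (∀ v, X v) → ℝ) : ℝ :=
  sInf {r : ℝ | ∃ (m : ℕ) (g : ℕ → (∀ v, X v) → ℝ),
    (∀ i, (∃ C, ∀ x, |g i x| ≤ C) ∧ Measurable (g i)) ∧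
    (∀ x, f x = ∑ i ∈ Finset.range (m + 1), g i x) ∧
    r = ∑ i ∈ Finset.range (m + 1),
        (∏ J ∈ 𝓙, UJnorm X μ J (g i) ^ (2 ^ J.ncard)) ^
          ((1 : ℝ) / ∑ J ∈ 𝓙, (2 : ℝ) ^ J.ncard)}

/-- The σ-algebra `𝒞_I` on `X = ∏_v X_v` of sets depending only on the coordinates in `I`. -/
def cylAlg {V : Type} (X : V → Type) [∀ v, MeasurableSpace (X v)] (I : Set V) :
    MeasurableSpace (∀ v, X v) :=
  MeasurableSpace.comap (fun (x : ∀ v, X v) (i : ↥I) => x ↑i) MeasurableSpace.pi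

/-- The σ-algebra `𝒞_𝓘` generated by `⋃_{I ∈ 𝓘} 𝒞_I`. -/
def cylAlgFam {V : Type} (X : V → Type) [∀ v, MeasurableSpace (X v)] (𝓘 : Set (Set V)) :
    MeasurableSpace (∀ v, X v) :=
  ⨆ I ∈ 𝓘, cylAlg X I

/-- `𝓘^⊥`: the sets `J ⊆ V` not contained in any member of `𝓘`, all of whose proper
subsets are contained in some member of `𝓘`. -/
def Iperp {V : Type} (𝓘 : Set (Set V)) : Set (Set V) :=
  {J | (∀ I ∈ 𝓘, ¬ J ⊆ I) ∧ ∀ J' ⊂ J, ∃ I ∈ 𝓘, J' ⊆ I}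

section Helpers

variable {V : Type} [Fintype V] [DecidableEq V] (X : V → Type)
  [∀ v, MeasurableSpace (X v)] (μ : ∀ v, Measure (X v))
  [∀ v, IsProbabilityMeasure (μ v)]

include μ in
lemma nonempty_X (v : V) : Nonempty (X v) := by
  by_contra hne
  rw [not_nonempty_iff] at hne
  have h1 : (μ v) Set.univ = 1 := measure_univ
  rw [Set.univ_eq_empty_iff.mpr hne, measure_empty] at h1
  exact zero_ne_one h1

lemma integrable_of_bdd {α : Type*} [MeasurableSpace α] {ν : Measure α} [IsFiniteMeasure ν]
    {φ : α → ℝ} {C : ℝ} (hφ : Measurable φ) (hC : ∀ x, |φ x| ≤ C) : Integrable φ ν :=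
  Integrable.mono' (integrable_const C) hφ.aestronglyMeasurable
    (Filter.Eventually.of_forall fun x => by simpa [Real.norm_eq_abs] using hC x)

lemma abs_integral_le_of_bdd {α : Type*} [MeasurableSpace α] {ν : Measure α}
    [IsProbabilityMeasure ν] {φ : α → ℝ} {C : ℝ} (hC : ∀ x, |φ x| ≤ C) :
    |∫ x, φ x ∂ν| ≤ C := by
  have := norm_integral_le_of_norm_le_const (μ := ν) (f := φ) (C := C)
    (Filter.Eventually.of_forall fun x => by simpa [Real.norm_eq_abs] using hC x)
  simpa [Real.norm_eq_abs, measure_univ] using this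

lemma abs_prod_le {ι : Type*} (s : Finset ι) (a : ι → ℝ) {C : ℝ} (hC0 : 0 ≤ C)
    (h : ∀ i ∈ s, |a i| ≤ C) : |∏ i ∈ s, a i| ≤ C ^ s.card := by
  rw [Finset.abs_prod]
  calc ∏ i ∈ s, |a i| ≤ ∏ _i ∈ s, C := Finset.prod_le_prod (fun i _ => abs_nonneg _) h
  _ = C ^ s.card := Finset.prod_const C

lemma mp_fst {α β : Type*} [MeasurableSpace α] [MeasurableSpace β] (νa : Measure α)
    (νb : Measure β) [SFinite νa] [IsProbabilityMeasure νb] :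
    MeasurePreserving (Prod.fst : α × β → α) (νa.prod νb) νa :=
  ⟨measurable_fst, by rw [Measure.map_fst_prod, measure_univ, one_smul]⟩

lemma sq_integral_mul_le {α : Type*} [MeasurableSpace α] {ν : Measure α}
    {u v : α → ℝ} (hu2 : Integrable (fun x => u x ^ 2) ν)
    (hv2 : Integrable (fun x => v x ^ 2) ν) (huv : Integrable (fun x => u x * v x) ν) :
    (∫ x, u x * v x ∂ν) ^ 2 ≤ (∫ x, u x ^ 2 ∂ν) * ∫ x, v x ^ 2 ∂ν := by
  set A := ∫ x, u x ^ 2 ∂ν with hA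
  set B := ∫ x, v x ^ 2 ∂ν with hB
  set C := ∫ x, u x * v x ∂ν with hCdef
  have hA0 : 0 ≤ A := integral_nonneg fun x => sq_nonneg _
  have hB0 : 0 ≤ B := integral_nonneg fun x => sq_nonneg _
  have key : 0 ≤ B ^ 2 * A - 2 * B * C * C + C ^ 2 * B := by
    have h0 : 0 ≤ ∫ x, (B * u x - C * v x) ^ 2 ∂ν := integral_nonneg fun x => sq_nonneg _
    have i1 : Integrable (fun x => B ^ 2 * u x ^ 2) ν := hu2.const_mul _
    have i2 : Integrable (fun x => 2 * B * C * (u x * v x)) ν := huv.const_mul _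
    have i3 : Integrable (fun x => C ^ 2 * v x ^ 2) ν := hv2.const_mul _
    have i12 : Integrable (fun x => B ^ 2 * u x ^ 2 - 2 * B * C * (u x * v x)) ν := i1.sub i2
    have hexp : (fun x => (B * u x - C * v x) ^ 2)
        = fun x => B ^ 2 * u x ^ 2 - 2 * B * C * (u x * v x) + C ^ 2 * v x ^ 2 :=
      funext fun x => by ring
    rw [hexp] at h0
    rwa [integral_add i12 i3, integral_sub i1 i2, integral_const_mul, integral_const_mul,
      integral_const_mul, ← hA, ← hB, ← hCdef] at h0
  rcases eq_or_lt_of_le hB0 with hBz | hBpos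
  · have hv0 : (fun x => v x ^ 2) =ᵐ[ν] 0 :=
      (integral_eq_zero_iff_of_nonneg (fun x => sq_nonneg (v x)) hv2).mp hBz.symm
    have hC0 : C = 0 := by
      have huv0 : (fun x => u x * v x) =ᵐ[ν] 0 := by
        filter_upwards [hv0] with x hx
        have : v x = 0 := by
          have := hx
          simp only [Pi.zero_apply] at this
          exact (pow_eq_zero_iff two_ne_zero).mp this
        simp [this]
      rw [hCdef, integral_congr_ae huv0]
      simp
    rw [hC0]
    simpa using mul_nonneg hA0 hB0
  · nlinarith [key, hBpos]

def mixf (J : Set V) (p : (∀ v, X v) × (∀ v, X v)) (ω : ↥J → Bool) : ∀ v, X v := fun v =>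
  if h : v ∈ J then (if ω ⟨v, h⟩ then p.2 v else p.1 v) else p.1 v

lemma measurable_mixf (J : Set V) (ω : ↥J → Bool) :
    Measurable fun p : (∀ v, X v) × (∀ v, X v) => mixf X J p ω := by
  apply measurable_pi_lambda
  intro v
  by_cases h : v ∈ J
  · simp only [mixf, dif_pos h]
    cases hb : ω ⟨v, h⟩
    · simpa [hb, Function.comp_def] using (measurable_pi_apply v).comp (measurable_fst :
        Measurable fun p : (∀ v, X v) × (∀ v, X v) => p.1)
    · simpa [hb, Function.comp_def] using (measurable_pi_apply v).comp (measurable_snd :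
        Measurable fun p : (∀ v, X v) × (∀ v, X v) => p.2)
  · simp only [mixf, dif_neg h]
    exact (measurable_pi_apply v).comp measurable_fst

def Dint (J : Set V) (g : (∀ v, X v) → ℝ) : ℝ :=
  ∫ p, (∏ ω : ↥J → Bool, g (mixf X J p ω)) ∂((Measure.pi μ).prod (Measure.pi μ))

lemma measurable_mixProd (J : Set V) {g : (∀ v, X v) → ℝ} (hg : Measurable g) :
    Measurable fun p : (∀ v, X v) × (∀ v, X v) => ∏ ω : ↥J → Bool, g (mixf X J p ω) :=
  Finset.measurable_prod _ fun ω _ => hg.comp (measurable_mixf X J ω)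

lemma integrable_mixProd (J : Set V) {g : (∀ v, X v) → ℝ} (hg : Measurable g)
    {C : ℝ} (hC : ∀ x, |g x| ≤ C) :
    Integrable (fun p => ∏ ω : ↥J → Bool, g (mixf X J p ω))
      ((Measure.pi μ).prod (Measure.pi μ)) := by
  refine integrable_of_bdd (measurable_mixProd X J hg)
    (C := (max C 0) ^ (Finset.univ : Finset (↥J → Bool)).card) fun p => ?_
  exact abs_prod_le _ _ (le_max_right _ _) fun ω _ => (hC _).trans (le_max_left _ _)

lemma Dint_of_isEmpty (J : Set V) (hJ : IsEmpty (↥J)) {g : (∀ v, X v) → ℝ}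
    (hg : Measurable g) : Dint X μ J g = ∫ x, g x ∂(Measure.pi μ) := by
  haveI := hJ
  have h1 : ∀ p : (∀ v, X v) × (∀ v, X v),
      (∏ ω : ↥J → Bool, g (mixf X J p ω)) = g p.1 := by
    intro p
    have h2 : ∀ ω : ↥J → Bool, mixf X J p ω = p.1 := by
      intro ω; funext v
      have hv : v ∉ J := fun h => hJ.false ⟨v, h⟩
      simp [mixf, hv]
    rw [Finset.prod_congr rfl fun ω _ => congrArg g (h2 ω), Finset.prod_const,
      Finset.card_univ, Fintype.card_unique, pow_one]
  unfold Dint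
  rw [integral_congr_ae (Filter.Eventually.of_forall h1)]
  have hmp := mp_fst (Measure.pi μ) (Measure.pi μ)
  conv_rhs => rw [← hmp.map_eq]
  rw [integral_map measurable_fst.aemeasurable
    (by rw [hmp.map_eq]; exact hg.aestronglyMeasurable)]


lemma zeta_mp (J : Set V) :
    MeasurePreserving
      (fun uv : ((∀ v : ↥J, X ↑v) × (∀ v : ↥J, X ↑v)) =>
        (fun q : ↥J × Bool => if q.2 then uv.2 q.1 else uv.1 q.1 : ∀ q : ↥J × Bool, X ↑q.1))
      ((Measure.pi fun v : ↥J => μ ↑v).prod (Measure.pi fun v : ↥J => μ ↑v))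
      (Measure.pi fun q : ↥J × Bool => μ ↑q.1) := by
  have hζm : Measurable
      (fun uv : ((∀ v : ↥J, X ↑v) × (∀ v : ↥J, X ↑v)) =>
        (fun q : ↥J × Bool => if q.2 then uv.2 q.1 else uv.1 q.1 : ∀ q : ↥J × Bool, X ↑q.1)) := by
    apply measurable_pi_lambda
    intro q
    cases hq : q.2
    · simpa [hq, Function.comp_def] using (measurable_pi_apply q.1).comp
        (measurable_fst : Measurable fun uv : ((∀ v : ↥J, X ↑v) × (∀ v : ↥J, X ↑v)) => uv.1)
    · simpa [hq, Function.comp_def] using (measurable_pi_apply q.1).comp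
        (measurable_snd : Measurable fun uv : ((∀ v : ↥J, X ↑v) × (∀ v : ↥J, X ↑v)) => uv.2)
  refine ⟨hζm, ?_⟩
  refine (Measure.pi_eq fun s hs => ?_).symm
  rw [Measure.map_apply hζm (MeasurableSet.univ_pi hs)]
  have hpre : (fun uv : ((∀ v : ↥J, X ↑v) × (∀ v : ↥J, X ↑v)) =>
        (fun q : ↥J × Bool => if q.2 then uv.2 q.1 else uv.1 q.1 : ∀ q : ↥J × Bool, X ↑q.1))
        ⁻¹' (Set.univ.pi s)
      = (Set.univ.pi fun v : ↥J => s (v, false)) ×ˢ (Set.univ.pi fun v : ↥J => s (v, true)) := by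
    ext ⟨u, u'⟩
    simp only [Set.mem_preimage, Set.mem_pi, Set.mem_univ, forall_true_left, Set.mem_prod]
    constructor
    · intro hq
      exact ⟨fun v => by simpa using hq (v, false), fun v => by simpa using hq (v, true)⟩
    · rintro ⟨h0, h1⟩ ⟨v, b⟩
      cases b
      · simpa using h0 v
      · simpa using h1 v
  rw [hpre, Measure.prod_prod, Measure.pi_pi, Measure.pi_pi,
    Fintype.prod_prod_type (f := fun q : ↥J × Bool => (μ ↑q.1) (s q))]
  simp only [Fintype.prod_bool]
  rw [Finset.prod_mul_distrib]
  ring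

lemma theta_mp (J : Set V) :
    MeasurePreserving
      (fun p : ((∀ v, X v) × (∀ v, X v)) =>
        ((fun v : ↥(Jᶜ : Set V) => p.1 ↑v, fun q : ↥J × Bool => if q.2 then p.2 ↑q.1 else p.1 ↑q.1) :
          (∀ v : ↥(Jᶜ : Set V), X ↑v) × (∀ q : ↥J × Bool, X ↑q.1)))
      ((Measure.pi μ).prod (Measure.pi μ))
      ((Measure.pi fun v : ↥(Jᶜ : Set V) => μ ↑v).prod (Measure.pi fun q : ↥J × Bool => μ ↑q.1)) := by
  have e1 := measurePreserving_piEquivPiSubtypeProd μ (fun v => v ∈ J)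
  have h1 := e1.prod e1
  have h2 := (MeasurePreserving.id
      ((Measure.pi fun v : {v // v ∈ J} => μ ↑v).prod
        (Measure.pi fun v : {v // ¬ v ∈ J} => μ ↑v))).prod
    (mp_fst (Measure.pi fun v : {v // v ∈ J} => μ ↑v) (Measure.pi fun v : {v // ¬ v ∈ J} => μ ↑v))
  have h3 := (Measure.measurePreserving_swap
      (μ := Measure.pi fun v : {v // v ∈ J} => μ ↑v)
      (ν := Measure.pi fun v : {v // ¬ v ∈ J} => μ ↑v)).prod
    (MeasurePreserving.id (Measure.pi fun v : {v // v ∈ J} => μ ↑v))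
  have h4 := measurePreserving_prodAssoc (Measure.pi fun v : {v // ¬ v ∈ J} => μ ↑v)
    (Measure.pi fun v : {v // v ∈ J} => μ ↑v) (Measure.pi fun v : {v // v ∈ J} => μ ↑v)
  have h5 := (MeasurePreserving.id (Measure.pi fun v : {v // ¬ v ∈ J} => μ ↑v)).prod (zeta_mp X μ J)
  exact h5.comp (h4.comp (h3.comp (h2.comp h1)))

lemma UJint_eq_Dint (J : Set V) {g : (∀ v, X v) → ℝ} (hg : Measurable g) :
    UJint X μ J g = Dint X μ J g := by
  have hθ := theta_mp X μ J
  have hrecomb_meas : Measurable fun p : ((∀ v : ↥(Jᶜ : Set V), X ↑v) × (∀ q : ↥J × Bool, X ↑q.1)) =>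
      ∏ ω : ↥J → Bool, g (recomb X J p.1 p.2 ω) := by
    refine Finset.measurable_prod _ fun ω _ => hg.comp ?_
    apply measurable_pi_lambda
    intro v
    by_cases h : v ∈ J
    · simp only [recomb, dif_pos h]
      exact (measurable_pi_apply _).comp measurable_snd
    · simp only [recomb, dif_neg h]
      exact (measurable_pi_apply _).comp measurable_fst
  unfold UJint
  rw [← hθ.map_eq, integral_map hθ.measurable.aemeasurable
    (by rw [hθ.map_eq]; exact hrecomb_meas.aestronglyMeasurable)]
  unfold Dint
  refine integral_congr_ae (Filter.Eventually.of_forall fun p => ?_)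
  refine Finset.prod_congr rfl fun ω _ => congrArg g ?_
  funext v
  by_cases h : v ∈ J <;> simp [recomb, mixf, h]

lemma mp_r4 {α β γ δ : Type*} [MeasurableSpace α] [MeasurableSpace β] [MeasurableSpace γ]
    [MeasurableSpace δ] (μa : Measure α) (μb : Measure β) (μc : Measure γ) (μd : Measure δ)
    [SigmaFinite μa] [SigmaFinite μb] [SigmaFinite μc] [SigmaFinite μd] :
    MeasurePreserving (fun q : (α × β) × (γ × δ) => ((q.1.1, q.2.1), (q.1.2, q.2.2)))
      ((μa.prod μb).prod (μc.prod μd)) ((μa.prod μc).prod (μb.prod μd)) := by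
  have h1 := measurePreserving_prodAssoc μa μb (μc.prod μd)
  have hi1 := (measurePreserving_prodAssoc μb μc μd).symm
    (MeasurableEquiv.prodAssoc : (β × γ) × δ ≃ᵐ β × γ × δ)
  have hi2 := (Measure.measurePreserving_swap (μ := μb) (ν := μc)).prod
    (MeasurePreserving.id μd)
  have hi3 := measurePreserving_prodAssoc μc μb μd
  have h2 := (MeasurePreserving.id μa).prod ((hi3.comp hi2).comp hi1)
  have h3 := (measurePreserving_prodAssoc μa μc (μb.prod μd)).symm
    (MeasurableEquiv.prodAssoc : (α × γ) × (β × δ) ≃ᵐ α × γ × β × δ)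
  exact h3.comp (h2.comp h1)

lemma cs2 (j : V) (F G : ((∀ v, X v) × (∀ v, X v)) → ℝ)
    (hFm : Measurable F) {CF : ℝ} (hCF : ∀ p, |F p| ≤ CF)
    (hFy : ∀ x y y', (∀ v, v ≠ j → y v = y' v) → F (x, y) = F (x, y'))
    (hGm : Measurable G) (hG1 : ∀ p, |G p| ≤ 1)
    (hGxy : ∀ x x' y y', (∀ v, v ≠ j → x v = x' v) → (∀ v, v ≠ j → y v = y' v) →
      G (x, y) = G (x', y')) :
    (∫ p, F p * G p ∂((Measure.pi μ).prod (Measure.pi μ))) ^ 2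
      ≤ ∫ p, F p * F (Function.update p.1 j (p.2 j), p.2)
          ∂((Measure.pi μ).prod (Measure.pi μ)) := by
  classical
  haveI : ∀ v, Nonempty (X v) := nonempty_X X μ
  have hCF0 : 0 ≤ CF := le_trans (abs_nonneg _) (hCF (Classical.arbitrary _))
  set νp := Measure.pi fun v : {v : V // v = j} => μ ↑v with hνp
  set νz := Measure.pi fun v : {v : V // ¬ v = j} => μ ↑v with hνz
  set em : ((∀ v : {v : V // v = j}, X ↑v) × (∀ v : {v : V // ¬ v = j}, X ↑v)) → (∀ v, X v) :=
    fun az v => if h : v = j then az.1 ⟨v, h⟩ else az.2 ⟨v, h⟩ with hemdef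
  have hem : MeasurePreserving em (νp.prod νz) (Measure.pi μ) := by
    have h := (measurePreserving_piEquivPiSubtypeProd μ (fun v => v = j)).symm
      (MeasurableEquiv.piEquivPiSubtypeProd X (fun v => v = j))
    have he : ⇑(MeasurableEquiv.piEquivPiSubtypeProd X (fun v => v = j)).symm = em := by
      funext az
      rfl
    rw [he] at h
    rw [hνp, hνz]
    convert h using 2 <;> congr!
  set T : (((∀ v : {v : V // ¬ v = j}, X ↑v) × (∀ v : {v : V // ¬ v = j}, X ↑v)) ×
      ((∀ v : {v : V // v = j}, X ↑v) × (∀ v : {v : V // v = j}, X ↑v))) →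
      ((∀ v, X v) × (∀ v, X v)) :=
    fun q => (em (q.2.1, q.1.1), em (q.2.2, q.1.2)) with hTdef
  have hT : MeasurePreserving T ((νz.prod νz).prod (νp.prod νp))
      ((Measure.pi μ).prod (Measure.pi μ)) := by
    have hs : MeasurePreserving Prod.swap
        ((νz.prod νz).prod (νp.prod νp)) ((νp.prod νp).prod (νz.prod νz)) :=
      Measure.measurePreserving_swap
    have hr := mp_r4 νp νp νz νz
    exact (hem.prod hem).comp (hr.comp hs)
  have em_ne : ∀ (a a' : ∀ v : {v : V // v = j}, X ↑v) (z : ∀ v : {v : V // ¬ v = j}, X ↑v)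
      (v : V), v ≠ j → em (a, z) v = em (a', z) v := by
    intro a a' z v hv; simp only [hemdef, dif_neg hv]
  have em_upd : ∀ (a b : ∀ v : {v : V // v = j}, X ↑v)
      (z w : ∀ v : {v : V // ¬ v = j}, X ↑v),
      Function.update (em (a, z)) j (em (b, w) j) = em (b, z) := by
    intro a b z w
    funext v
    by_cases h : v = j
    · subst h
      rw [Function.update_self]
      simp only [hemdef, dif_pos rfl]
    · rw [Function.update_of_ne h]
      simp only [hemdef, dif_neg h]
  obtain ⟨a0⟩ : Nonempty (∀ v : {v : V // v = j}, X ↑v) := inferInstance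
  set F0 : (∀ v : {v : V // v = j}, X ↑v) → (∀ v : {v : V // ¬ v = j}, X ↑v) →
      (∀ v : {v : V // ¬ v = j}, X ↑v) → ℝ := fun a z w => F (em (a, z), em (a0, w)) with hF0
  set G0 : (∀ v : {v : V // ¬ v = j}, X ↑v) → (∀ v : {v : V // ¬ v = j}, X ↑v) → ℝ :=
    fun z w => G (em (a0, z), em (a0, w)) with hG0
  have fact1 : ∀ a b z w, F (em (a, z), em (b, w)) = F0 a z w := fun a b z w =>
    hFy _ _ _ fun v hv => em_ne b a0 w v hv
  have fact2 : ∀ a b z w, G (em (a, z), em (b, w)) = G0 z w := fun a b z w =>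
    hGxy _ _ _ _ (fun v hv => em_ne a a0 z v hv) (fun v hv => em_ne b a0 w v hv)
  have hem_meas : Measurable em := hem.measurable
  have hF0bd : ∀ a z w, |F0 a z w| ≤ CF := fun a z w => hCF _
  have hF0ma : ∀ z w, Measurable fun a => F0 a z w := fun z w =>
    hFm.comp ((hem_meas.comp (measurable_id.prodMk measurable_const)).prodMk measurable_const)
  set u : ((∀ v : {v : V // ¬ v = j}, X ↑v) × (∀ v : {v : V // ¬ v = j}, X ↑v)) → ℝ :=
    fun zw => ∫ a, F0 a zw.1 zw.2 ∂νp with hu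
  have hF0q : Measurable fun q : (((∀ v : {v : V // ¬ v = j}, X ↑v) ×
      (∀ v : {v : V // ¬ v = j}, X ↑v)) × (∀ v : {v : V // v = j}, X ↑v)) =>
      F0 q.2 q.1.1 q.1.2 :=
    hFm.comp ((hem_meas.comp (measurable_snd.prodMk
        (measurable_fst.comp measurable_fst))).prodMk
      (hem_meas.comp (measurable_const.prodMk (measurable_snd.comp measurable_fst))))
  have hum : Measurable u := by
    have h := (hF0q.stronglyMeasurable).integral_prod_right' (ν := νp)
    exact h.measurable
  have hubd : ∀ zw, |u zw| ≤ CF := fun zw => abs_integral_le_of_bdd fun a => hF0bd _ _ _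
  have hG0m : Measurable fun zw : ((∀ v : {v : V // ¬ v = j}, X ↑v) ×
      (∀ v : {v : V // ¬ v = j}, X ↑v)) => G0 zw.1 zw.2 :=
    hGm.comp ((hem_meas.comp (measurable_const.prodMk measurable_fst)).prodMk
      (hem_meas.comp (measurable_const.prodMk measurable_snd)))
  have hG0bd : ∀ z w, |G0 z w| ≤ 1 := fun z w => hG1 _
  -- LHS
  have hIeq : ∫ p, F p * G p ∂((Measure.pi μ).prod (Measure.pi μ))
      = ∫ zw, G0 zw.1 zw.2 * u zw ∂(νz.prod νz) := by
    rw [← hT.map_eq, integral_map hT.measurable.aemeasurable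
      (by rw [hT.map_eq]; exact (hFm.mul hGm).aestronglyMeasurable)]
    have hptwise : ∀ q, F (T q) * G (T q) = F0 q.2.1 q.1.1 q.1.2 * G0 q.1.1 q.1.2 := by
      rintro ⟨⟨z, w⟩, a, b⟩
      simp only [hTdef]
      rw [fact1, fact2]
    rw [integral_congr_ae (Filter.Eventually.of_forall hptwise)]
    have hint : Integrable (fun q : ((_ × _) × (_ × _)) =>
        F0 q.2.1 q.1.1 q.1.2 * G0 q.1.1 q.1.2) ((νz.prod νz).prod (νp.prod νp)) := by
      refine integrable_of_bdd ?_ (C := CF * 1) fun q => ?_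
      · exact (hFm.comp ((hem_meas.comp ((measurable_fst.comp measurable_snd).prodMk
          (measurable_fst.comp measurable_fst))).prodMk (hem_meas.comp
          (measurable_const.prodMk (measurable_snd.comp measurable_fst))))).mul
          (hG0m.comp measurable_fst)
      · rw [abs_mul]
        exact mul_le_mul (hF0bd _ _ _) (hG0bd _ _) (abs_nonneg _) hCF0
    rw [integral_prod _ hint]
    refine integral_congr_ae (Filter.Eventually.of_forall fun zw => ?_)
    have hmarg : ∫ ab : ((∀ v : {v : V // v = j}, X ↑v) × (∀ v : {v : V // v = j}, X ↑v)),
        F0 ab.1 zw.1 zw.2 ∂(νp.prod νp) = u zw := by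
      show _ = ∫ a, F0 a zw.1 zw.2 ∂νp
      have hmp := mp_fst νp νp
      conv_rhs => rw [← hmp.map_eq]
      rw [integral_map measurable_fst.aemeasurable
        (by rw [hmp.map_eq]; exact (hF0ma zw.1 zw.2).aestronglyMeasurable)]
    calc ∫ ab : ((∀ v : {v : V // v = j}, X ↑v) × (∀ v : {v : V // v = j}, X ↑v)),
        F0 ab.1 zw.1 zw.2 * G0 zw.1 zw.2 ∂(νp.prod νp)
        = (∫ ab : ((∀ v : {v : V // v = j}, X ↑v) × (∀ v : {v : V // v = j}, X ↑v)),
            F0 ab.1 zw.1 zw.2 ∂(νp.prod νp)) * G0 zw.1 zw.2 := by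
          rw [integral_mul_const]
      _ = G0 zw.1 zw.2 * u zw := by rw [hmarg, mul_comm]
  -- RHS
  have hσm : Measurable fun p : ((∀ v, X v) × (∀ v, X v)) =>
      Function.update p.1 j (p.2 j) := by
    apply measurable_pi_lambda
    intro v
    by_cases h : v = j
    · subst h
      simp only [Function.update_self]
      exact (measurable_pi_apply _).comp measurable_snd
    · simp only [Function.update_of_ne h]
      exact (measurable_pi_apply v).comp measurable_fst
  have hReq : ∫ p, F p * F (Function.update p.1 j (p.2 j), p.2)
      ∂((Measure.pi μ).prod (Measure.pi μ)) = ∫ zw, u zw ^ 2 ∂(νz.prod νz) := by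
    rw [← hT.map_eq, integral_map hT.measurable.aemeasurable
      (by rw [hT.map_eq]
          exact (hFm.mul (hFm.comp (hσm.prodMk measurable_snd))).aestronglyMeasurable)]
    have hptwise : ∀ q, F (T q) * F (Function.update (T q).1 j ((T q).2 j), (T q).2)
        = F0 q.2.1 q.1.1 q.1.2 * F0 q.2.2 q.1.1 q.1.2 := by
      rintro ⟨⟨z, w⟩, a, b⟩
      simp only [hTdef]
      rw [em_upd, fact1, fact1]
    rw [integral_congr_ae (Filter.Eventually.of_forall hptwise)]
    have hint : Integrable (fun q : ((_ × _) × (_ × _)) =>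
        F0 q.2.1 q.1.1 q.1.2 * F0 q.2.2 q.1.1 q.1.2) ((νz.prod νz).prod (νp.prod νp)) := by
      refine integrable_of_bdd ?_ (C := CF * CF) fun q => ?_
      · exact (hFm.comp ((hem_meas.comp ((measurable_fst.comp measurable_snd).prodMk
          (measurable_fst.comp measurable_fst))).prodMk (hem_meas.comp
          (measurable_const.prodMk (measurable_snd.comp measurable_fst))))).mul
          (hFm.comp ((hem_meas.comp ((measurable_snd.comp measurable_snd).prodMk
          (measurable_fst.comp measurable_fst))).prodMk (hem_meas.comp
          (measurable_const.prodMk (measurable_snd.comp measurable_fst)))))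
      · rw [abs_mul]
        exact mul_le_mul (hF0bd _ _ _) (hF0bd _ _ _) (abs_nonneg _) hCF0
    rw [integral_prod _ hint]
    refine integral_congr_ae (Filter.Eventually.of_forall fun zw => ?_)
    show (∫ ab : ((∀ v : {v : V // v = j}, X ↑v) × (∀ v : {v : V // v = j}, X ↑v)),
        F0 ab.1 zw.1 zw.2 * F0 ab.2 zw.1 zw.2 ∂(νp.prod νp)) = u zw ^ 2
    rw [integral_prod_mul (f := fun a => F0 a zw.1 zw.2) (g := fun b => F0 b zw.1 zw.2), sq]
  -- Cauchy-Schwarz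
  have hG0sq : Integrable (fun zw => G0 zw.1 zw.2 ^ 2) (νz.prod νz) := by
    refine integrable_of_bdd (hG0m.pow_const 2) (C := 1) fun zw => ?_
    rw [abs_pow]
    exact pow_le_one₀ (abs_nonneg _) (hG0bd _ _)
  have husq : Integrable (fun zw => u zw ^ 2) (νz.prod νz) := by
    refine integrable_of_bdd (hum.pow_const 2) (C := CF ^ 2) fun zw => ?_
    rw [abs_pow]
    exact pow_le_pow_left₀ (abs_nonneg _) (hubd _) 2
  have hGu : Integrable (fun zw => G0 zw.1 zw.2 * u zw) (νz.prod νz) := by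
    refine integrable_of_bdd (hG0m.mul hum) (C := 1 * CF) fun zw => ?_
    rw [abs_mul]
    exact mul_le_mul (hG0bd _ _) (hubd _) (abs_nonneg _) zero_le_one
  have hCS := sq_integral_mul_le (ν := νz.prod νz) (u := fun zw => G0 zw.1 zw.2) (v := u)
    hG0sq husq hGu
  have hG0int_le : ∫ zw, G0 zw.1 zw.2 ^ 2 ∂(νz.prod νz) ≤ 1 := by
    refine le_trans (le_abs_self _) (abs_integral_le_of_bdd fun zw => ?_)
    rw [abs_pow]
    exact pow_le_one₀ (abs_nonneg _) (hG0bd _ _)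
  calc (∫ p, F p * G p ∂((Measure.pi μ).prod (Measure.pi μ))) ^ 2
      = (∫ zw, G0 zw.1 zw.2 * u zw ∂(νz.prod νz)) ^ 2 := by rw [hIeq]
    _ ≤ (∫ zw, G0 zw.1 zw.2 ^ 2 ∂(νz.prod νz)) * ∫ zw, u zw ^ 2 ∂(νz.prod νz) := hCS
    _ ≤ 1 * ∫ zw, u zw ^ 2 ∂(νz.prod νz) := by
        refine mul_le_mul_of_nonneg_right hG0int_le ?_
        exact integral_nonneg fun zw => sq_nonneg _
    _ = ∫ zw, u zw ^ 2 ∂(νz.prod νz) := one_mul _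
    _ = ∫ p, F p * F (Function.update p.1 j (p.2 j), p.2)
          ∂((Measure.pi μ).prod (Measure.pi μ)) := hReq.symm

lemma prod_univ_inst {α M : Type*} [CommMonoid M] {i1 i2 : Fintype α} (f : α → M) :
    @Finset.prod α M _ (@Finset.univ α i1) f = @Finset.prod α M _ (@Finset.univ α i2) f := by
  have h : @Finset.univ α i1 = @Finset.univ α i2 :=
    congrArg (fun i => @Finset.univ α i) (Subsingleton.elim i1 i2)
  rw [h]

lemma prod_insert_split (S : Set V) (j : V) (hj : j ∉ S)
    (φ : (∀ v, X v) → ℝ) (p : (∀ v, X v) × (∀ v, X v)) :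
    (∏ ω : ↥(insert j S : Set V) → Bool, φ (mixf X (insert j S) p ω))
      = (∏ ω : ↥S → Bool, φ (mixf X S p ω)) *
        ∏ ω : ↥S → Bool, φ (mixf X S (Function.update p.1 j (p.2 j), p.2) ω) := by
  classical
  have hjS' : j ∈ (insert j S : Set V) := Set.mem_insert j S
  let E : ((↥S → Bool) × Bool) ≃ (↥(insert j S : Set V) → Bool) :=
  { toFun := fun ωb v => if h : (v : V) ∈ S then ωb.1 ⟨v, h⟩ else ωb.2
    invFun := fun ω => (fun v => ω ⟨v, Set.mem_insert_of_mem j v.2⟩, ω ⟨j, hjS'⟩)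
    left_inv := by
      rintro ⟨ω, b⟩
      refine Prod.ext ?_ ?_
      · funext v
        simp only []
        rw [dif_pos v.2]
      · simp only []
        rw [dif_neg hj]
    right_inv := by
      intro ω
      funext v
      by_cases h : (v : V) ∈ S
      · simp only [dif_pos h]
      · simp only [dif_neg h]
        congr 1
        refine Subtype.ext ?_
        have hv : (v : V) ∈ (insert j S : Set V) := v.2
        rcases Set.mem_insert_iff.mp hv with h1 | h1
        · exact h1.symm
        · exact absurd h1 h }
  have hfalse : ∀ ω : ↥S → Bool, mixf X (insert j S) p (E (ω, false)) = mixf X S p ω := by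
    intro ω; funext v
    by_cases hv : v ∈ S
    · have hv' : v ∈ (insert j S : Set V) := Set.mem_insert_of_mem j hv
      simp only [mixf, dif_pos hv, dif_pos hv']
      rw [show E (ω, false) ⟨v, hv'⟩ = ω ⟨v, hv⟩ from dif_pos hv]
    · by_cases hvj : v = j
      · subst hvj
        simp only [mixf, dif_pos (Set.mem_insert v S), dif_neg hv]
        rw [show E (ω, false) ⟨v, Set.mem_insert v S⟩ = false from dif_neg hv]
        simp
      · have hv' : v ∉ (insert j S : Set V) := by
          simp only [Set.mem_insert_iff]
          tauto
        simp only [mixf, dif_neg hv, dif_neg hv']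
  have htrue : ∀ ω : ↥S → Bool, mixf X (insert j S) p (E (ω, true))
      = mixf X S (Function.update p.1 j (p.2 j), p.2) ω := by
    intro ω; funext v
    by_cases hv : v ∈ S
    · have hv' : v ∈ (insert j S : Set V) := Set.mem_insert_of_mem j hv
      have hvj : v ≠ j := fun h => hj (h ▸ hv)
      simp only [mixf, dif_pos hv, dif_pos hv']
      rw [show E (ω, true) ⟨v, hv'⟩ = ω ⟨v, hv⟩ from dif_pos hv]
      rw [Function.update_of_ne hvj]
    · by_cases hvj : v = j
      · subst hvj
        simp only [mixf, dif_pos (Set.mem_insert v S), dif_neg hv]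
        rw [show E (ω, true) ⟨v, Set.mem_insert v S⟩ = true from dif_neg hv]
        simp only [if_true]
        rw [Function.update_self]
      · have hv' : v ∉ (insert j S : Set V) := by
          simp only [Set.mem_insert_iff]
          tauto
        simp only [mixf, dif_neg hv, dif_neg hv']
        rw [Function.update_of_ne hvj]
  refine Eq.trans (Equiv.prod_comp E fun ω' => φ (mixf X (insert j S) p ω')).symm ?_
  refine Eq.trans (Fintype.prod_prod_type _) ?_
  calc (∏ ω : ↥S → Bool, ∏ b : Bool, φ (mixf X (insert j S) p (E (ω, b))))
      = ∏ ω : ↥S → Bool, (φ (mixf X S (Function.update p.1 j (p.2 j), p.2) ω)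
          * φ (mixf X S p ω)) := by
        refine Finset.prod_congr rfl fun ω _ => ?_
        rw [Fintype.prod_bool, htrue ω, hfalse ω]
    _ = _ := by rw [Finset.prod_mul_distrib, mul_comm]

lemma keyCS (S : Set V) (j : V) (hj : j ∉ S) {Ψ H : (∀ v, X v) → ℝ}
    (hΨm : Measurable Ψ) {CΨ : ℝ} (hCΨ : ∀ x, |Ψ x| ≤ CΨ)
    (hHm : Measurable H) (hH1 : ∀ x, |H x| ≤ 1)
    (hHj : ∀ x y, (∀ v, v ≠ j → x v = y v) → H x = H y) :
    (Dint X μ S fun x => Ψ x * H x) ^ 2 ≤ Dint X μ (insert j S) Ψ := by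
  classical
  set F : ((∀ v, X v) × (∀ v, X v)) → ℝ := fun p => ∏ ω : ↥S → Bool, Ψ (mixf X S p ω) with hF
  set G : ((∀ v, X v) × (∀ v, X v)) → ℝ := fun p => ∏ ω : ↥S → Bool, H (mixf X S p ω) with hG
  have hFm : Measurable F := measurable_mixProd X S hΨm
  have hGm : Measurable G := measurable_mixProd X S hHm
  have hFbd : ∀ p, |F p| ≤ (max CΨ 0) ^ (Finset.univ : Finset (↥S → Bool)).card := fun p =>
    abs_prod_le _ _ (le_max_right _ _) fun ω _ => (hCΨ _).trans (le_max_left _ _)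
  have hG1' : ∀ p, |G p| ≤ 1 := fun p => by
    have h := abs_prod_le (Finset.univ : Finset (↥S → Bool)) (fun ω => H (mixf X S p ω))
      (C := 1) zero_le_one fun ω _ => hH1 _
    simpa using h
  have hFy : ∀ x y y', (∀ v, v ≠ j → y v = y' v) → F (x, y) = F (x, y') := by
    intro x y y' hyy
    refine Finset.prod_congr rfl fun ω _ => congrArg Ψ ?_
    funext v
    by_cases hv : v ∈ S
    · have hvj : v ≠ j := fun h => hj (h ▸ hv)
      simp only [mixf, dif_pos hv]
      rw [hyy v hvj]
    · simp only [mixf, dif_neg hv]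
  have hGxy : ∀ x x' y y', (∀ v, v ≠ j → x v = x' v) → (∀ v, v ≠ j → y v = y' v) →
      G (x, y) = G (x', y') := by
    intro x x' y y' hxx hyy
    refine Finset.prod_congr rfl fun ω _ => hHj _ _ fun v hv => ?_
    by_cases hvS : v ∈ S
    · simp only [mixf, dif_pos hvS]
      rw [hxx v hv, hyy v hv]
    · simp only [mixf, dif_neg hvS]
      exact hxx v hv
  have hcs := cs2 X μ j F G hFm hFbd hFy hGm hG1' hGxy
  have hL : Dint X μ S (fun x => Ψ x * H x)
      = ∫ p, F p * G p ∂((Measure.pi μ).prod (Measure.pi μ)) := by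
    unfold Dint
    refine integral_congr_ae (Filter.Eventually.of_forall fun p => ?_)
    exact Finset.prod_mul_distrib
  have hR : Dint X μ (insert j S) Ψ = ∫ p, F p * F (Function.update p.1 j (p.2 j), p.2)
      ∂((Measure.pi μ).prod (Measure.pi μ)) := by
    unfold Dint
    refine integral_congr_ae (Filter.Eventually.of_forall fun p => ?_)
    exact Eq.trans (prod_univ_inst _) (prod_insert_split X S j hj Ψ p)
  rw [hL, hR]
  exact hcs

lemma Dint_nonneg (J : Set V) (hJ : J.Nonempty) {g : (∀ v, X v) → ℝ} (hg : Measurable g)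
    {C : ℝ} (hC : ∀ x, |g x| ≤ C) : 0 ≤ Dint X μ J g := by
  obtain ⟨j, hj⟩ := hJ
  have h := keyCS X μ (J \ {j}) j (by simp) (H := fun _ => 1) hg hC measurable_const
    (fun x => by norm_num) (fun _ _ _ => rfl)
  rw [Set.insert_diff_singleton, Set.insert_eq_self.mpr hj] at h
  exact le_trans (sq_nonneg _) h

lemma gcs (J : Set V) {g : (∀ v, X v) → ℝ} (hg : Measurable g) {Cg : ℝ}
    (hCg : ∀ x, |g x| ≤ Cg) (H : V → (∀ v, X v) → ℝ)
    (hHm : ∀ k, Measurable (H k)) (hH1 : ∀ k x, |H k x| ≤ 1)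
    (hHdep : ∀ k x y, (∀ v, v ≠ k → x v = y v) → H k x = H k y) :
    |∫ x, g x * ∏ k ∈ J.toFinset, H k x ∂(Measure.pi μ)| ^ 2 ^ J.ncard
      ≤ |Dint X μ J g| := by
  classical
  set Ig := ∫ x, g x * ∏ k ∈ J.toFinset, H k x ∂(Measure.pi μ) with hIg
  have hprodbd : ∀ (s : Finset V) x, |∏ k ∈ s, H k x| ≤ 1 := fun s x => by
    have h := abs_prod_le s (fun k => H k x) (C := 1) zero_le_one fun k _ => hH1 k x
    simpa using h
  have main : ∀ S : Finset V, ↑S ⊆ J → |Ig| ^ 2 ^ S.card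
      ≤ |Dint X μ ↑S (fun x => g x * ∏ k ∈ J.toFinset \ S, H k x)| := by
    intro S
    induction S using Finset.induction_on with
    | empty =>
      intro _
      simp only [Finset.card_empty, pow_zero, pow_one, Finset.sdiff_empty, Finset.coe_empty]
      rw [Dint_of_isEmpty X μ ∅ ⟨fun x => x.2⟩ (g := fun x => g x * ∏ k ∈ J.toFinset, H k x)
        (hg.mul (Finset.measurable_prod _ fun k _ => hHm k))]
    | @insert j S hjS ih =>
      intro hsub
      have hSJ : (↑S : Set V) ⊆ J :=
        subset_trans (Finset.coe_subset.mpr (Finset.subset_insert j S)) hsub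
      have hjJ : j ∈ J := hsub (by simp)
      have ihS := ih hSJ
      have hΨm : Measurable fun x => g x * ∏ k ∈ J.toFinset \ insert j S, H k x :=
        hg.mul (Finset.measurable_prod _ fun k _ => hHm k)
      have hΨbd : ∀ x, |g x * ∏ k ∈ J.toFinset \ insert j S, H k x| ≤ max Cg 0 := fun x => by
        rw [abs_mul]
        calc |g x| * |∏ k ∈ J.toFinset \ insert j S, H k x|
            ≤ max Cg 0 * 1 := mul_le_mul ((hCg x).trans (le_max_left _ _)) (hprodbd _ x)
              (abs_nonneg _) (le_max_right _ _)
          _ = max Cg 0 := mul_one _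
      have hkey := keyCS X μ ↑S j (by exact_mod_cast hjS) hΨm hΨbd (hHm j) (hH1 j) (hHdep j)
      have hsplitH : (fun x => (g x * ∏ k ∈ J.toFinset \ insert j S, H k x) * H j x)
          = fun x => g x * ∏ k ∈ J.toFinset \ S, H k x := by
        funext x
        have hjmem : j ∈ J.toFinset \ S :=
          Finset.mem_sdiff.mpr ⟨Set.mem_toFinset.mpr hjJ, hjS⟩
        rw [Finset.sdiff_insert, ← Finset.mul_prod_erase (J.toFinset \ S) (fun k => H k x) hjmem]
        ring
      rw [hsplitH] at hkey
      rw [Finset.coe_insert]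
      calc |Ig| ^ 2 ^ (insert j S).card
          = (|Ig| ^ 2 ^ S.card) ^ 2 := by
            rw [Finset.card_insert_of_notMem hjS, pow_succ, pow_mul]
        _ ≤ |Dint X μ ↑S (fun x => g x * ∏ k ∈ J.toFinset \ S, H k x)| ^ 2 :=
            pow_le_pow_left₀ (pow_nonneg (abs_nonneg _) _) ihS 2
        _ = Dint X μ ↑S (fun x => g x * ∏ k ∈ J.toFinset \ S, H k x) ^ 2 := sq_abs _
        _ ≤ Dint X μ (insert j ↑S) (fun x => g x * ∏ k ∈ J.toFinset \ insert j S, H k x) :=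
            hkey
        _ ≤ |Dint X μ (insert j ↑S) (fun x => g x * ∏ k ∈ J.toFinset \ insert j S, H k x)| :=
            le_abs_self _
  have hmain := main J.toFinset (by simp [Set.coe_toFinset])
  simp only [Finset.sdiff_self, Finset.prod_empty, mul_one, Set.coe_toFinset] at hmain
  rw [Set.ncard_eq_toFinset_card']
  exact hmain

lemma cylAlg_le (I : Set V) : cylAlg X I ≤ MeasurableSpace.pi := by
  intro s hs
  obtain ⟨B, hB, rfl⟩ := hs
  exact (measurable_pi_lambda (fun (x : ∀ v, X v) (i : ↥I) => x ↑i)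
    (fun i => measurable_pi_apply (↑i : V))) hB

lemma cylAlgFam_le (𝓘 : Set (Set V)) : cylAlgFam X 𝓘 ≤ MeasurableSpace.pi := by
  refine iSup₂_le fun I _ => cylAlg_le X I

lemma cylAlg_mem_iff {I : Set V} {A : Set (∀ v, X v)} (hA : MeasurableSet[cylAlg X I] A)
    (x y : ∀ v, X v) (hxy : ∀ v ∈ I, x v = y v) : x ∈ A ↔ y ∈ A := by
  obtain ⟨B, hB, rfl⟩ := hA
  have h : (fun i : ↥I => x ↑i) = fun i : ↥I => y ↑i := funext fun i => hxy ↑i i.2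
  simp only [Set.mem_preimage, h]

include μ in
lemma exists_good_rectangle {f : (∀ v, X v) → ℝ} (hfm : Measurable f) {C : ℝ}
    (hC : ∀ x, |f x| ≤ C) (𝓘 : Set (Set V))
    (hne : ¬ (MeasureTheory.condExp (cylAlgFam X 𝓘) (Measure.pi μ) f =ᵐ[Measure.pi μ] 0)) :
    ∃ (t : Finset (Set V)) (A : Set V → Set (∀ v, X v)), ↑t ⊆ 𝓘 ∧
      (∀ I ∈ t, MeasurableSet[cylAlg X I] (A I)) ∧
      (∫ x in ⋂ I ∈ t, A I, f x ∂(Measure.pi μ)) ≠ 0 := by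
  by_contra hcon
  push_neg at hcon
  apply hne
  have hm : cylAlgFam X 𝓘 ≤ MeasurableSpace.pi := cylAlgFam_le X 𝓘
  have hfi : Integrable f (Measure.pi μ) := integrable_of_bdd hfm hC
  haveI : SigmaFinite ((Measure.pi μ).trim hm) := by
    haveI : IsFiniteMeasure ((Measure.pi μ).trim hm) := isFiniteMeasure_trim hm
    infer_instance
  have hzero : ∀ s : Set (∀ v, X v), MeasurableSet[cylAlgFam X 𝓘] s →
      ∫ x in s, f x ∂(Measure.pi μ) = 0 := by
    have hgen : cylAlgFam X 𝓘 = MeasurableSpace.generateFrom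
        (piiUnionInter (fun I => {s | MeasurableSet[cylAlg X I] s}) 𝓘) :=
      (generateFrom_piiUnionInter_measurableSet _ _).symm
    have hpi : IsPiSystem (piiUnionInter (fun I => {s | MeasurableSet[cylAlg X I] s}) 𝓘) :=
      isPiSystem_piiUnionInter _ (fun I => @MeasurableSpace.isPiSystem_measurableSet _ (cylAlg X I)) _
    have huniv : ∫ x in (Set.univ : Set (∀ v, X v)), f x ∂(Measure.pi μ) = 0 := by
      have h := hcon ∅ (fun _ => ∅) (by simp) (by simp)
      simpa using h
    refine MeasurableSpace.induction_on_inter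
      (C := fun s _ => ∫ x in s, f x ∂(Measure.pi μ) = 0) hgen hpi ?_ ?_ ?_ ?_
    · simp
    · rintro s ⟨tf, htf, A, hA, rfl⟩
      exact hcon tf A htf (fun I hI => hA I hI)
    · intro s hs h0
      have hs' : MeasurableSet s := hm s hs
      have hadd := integral_add_compl hs' hfi
      rw [h0] at hadd
      rw [Measure.restrict_univ] at huniv
      rw [huniv] at hadd
      simpa using hadd
    · intro gseq hdisj hmeas h0
      rw [integral_iUnion (fun i => hm _ (hmeas i)) hdisj hfi.integrableOn]
      simp [h0]
  have h0 : (fun _ => (0 : ℝ)) =ᵐ[Measure.pi μ] MeasureTheory.condExp (cylAlgFam X 𝓘) (Measure.pi μ) f := by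
    refine ae_eq_condExp_of_forall_setIntegral_eq hm hfi ?_ ?_ ?_
    · intro s _ _
      exact (integrable_zero _ _ _).integrableOn
    · intro s hs _
      rw [hzero s hs]
      simp
    · exact stronglyMeasurable_const.aestronglyMeasurable
  exact h0.symm

end Helpers

/-- If `‖E[f | 𝒞_𝓘]‖_{L²(μ)} > 0` then `‖f‖_{U^{V,𝓘^⊥}} > 0`. -/
theorem UFamNorm_pos_of_condexp (V : Type) [Fintype V] [DecidableEq V] [Nonempty V]
    (X : V → Type) [∀ v, MeasurableSpace (X v)]
    (μ : ∀ v, Measure (X v)) [∀ v, IsProbabilityMeasure (μ v)]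
    (𝓘 : Set (Set V)) (h𝓘 : 𝓘.Nonempty)
    (𝓙 : Finset (Set V)) (h𝓙 : ↑𝓙 = Iperp 𝓘) (h𝓙ne : 𝓙.Nonempty)
    (f : (∀ v, X v) → ℝ) (hfb : ∃ C, ∀ x, |f x| ≤ C) (hfm : Measurable f)
    (h : 0 < eLpNorm (MeasureTheory.condExp (cylAlgFam X 𝓘) (Measure.pi μ) f) 2
        (Measure.pi μ)) :
    0 < UFamNorm X μ 𝓙 f := by
  classical
  haveI hXne : ∀ v, Nonempty (X v) := nonempty_X X μ
  haveI : Nonempty (∀ v, X v) := ⟨fun v => Classical.arbitrary _⟩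
  have hFne : ¬ (MeasureTheory.condExp (cylAlgFam X 𝓘) (Measure.pi μ) f
      =ᵐ[Measure.pi μ] 0) := by
    intro h0
    rw [eLpNorm_congr_ae h0, eLpNorm_zero] at h
    exact lt_irrefl 0 h
  obtain ⟨C, hC⟩ := hfb
  obtain ⟨t, A, htI, hAmeas, hPint⟩ := exists_good_rectangle X μ hfm hC 𝓘 hFne
  set P : Set (∀ v, X v) := ⋂ I ∈ t, A I with hPdef
  have hPm : MeasurableSet P :=
    Finset.measurableSet_biInter t fun I hI => cylAlg_le X I _ (hAmeas I hI)
  set χ : (∀ v, X v) → ℝ := Set.indicator P (fun _ => 1) with hχ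
  have hχm : Measurable χ := measurable_const.indicator hPm
  have hχ1 : ∀ x, |χ x| ≤ 1 := fun x => by
    by_cases hx : x ∈ P <;> simp [hχ, Set.indicator_apply, hx]
  have hfχ : ∫ x, f x * χ x ∂(Measure.pi μ) ≠ 0 := by
    have hind : (fun x => f x * χ x) = P.indicator f := by
      funext x
      by_cases hx : x ∈ P <;> simp [hχ, Set.indicator_apply, hx]
    rw [hind, integral_indicator hPm]
    exact hPint
  set η := |∫ x, f x * χ x ∂(Measure.pi μ)| with hη
  have hηpos : 0 < η := abs_pos.mpr hfχ
  set k : ℕ := ∑ J ∈ 𝓙, 2 ^ J.ncard with hk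
  set c : ℝ := ∑ J ∈ 𝓙, (2 : ℝ) ^ J.ncard with hc
  have hkc : (k : ℝ) = c := by rw [hk, hc]; push_cast; rfl
  have hkpos : 0 < k := by
    rw [hk]
    obtain ⟨J0, hJ0⟩ := h𝓙ne
    exact Finset.sum_pos' (fun _ _ => Nat.zero_le _) ⟨J0, hJ0, pow_pos (by norm_num) _⟩
  have hcpos : (0:ℝ) < c := by rw [← hkc]; exact_mod_cast hkpos
  have hkey : ∀ g0 : (∀ v, X v) → ℝ, Measurable g0 → (∃ C0, ∀ x, |g0 x| ≤ C0) →
      |∫ x, g0 x * χ x ∂(Measure.pi μ)|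
        ≤ (∏ J ∈ 𝓙, UJnorm X μ J g0 ^ 2 ^ J.ncard) ^ ((1:ℝ) / c) := by
    intro g0 hg0m hb0
    obtain ⟨C0, hC0⟩ := hb0
    set a := |∫ x, g0 x * χ x ∂(Measure.pi μ)| with ha
    have ha0 : 0 ≤ a := abs_nonneg _
    have hJfact : ∀ J ∈ 𝓙, a ^ 2 ^ J.ncard ≤ Dint X μ J g0
        ∧ UJnorm X μ J g0 ^ 2 ^ J.ncard = Dint X μ J g0 := by
      intro J hJ
      have hJperp : J ∈ Iperp 𝓘 := by rw [← h𝓙]; exact Finset.mem_coe.mpr hJ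
      obtain ⟨hJ1, hJ2⟩ := hJperp
      have hJne2 : J.Nonempty := by
        rcases Set.eq_empty_or_nonempty J with hemp | hne2
        · exfalso
          obtain ⟨I0, hI0⟩ := h𝓘
          exact hJ1 I0 hI0 (hemp ▸ Set.empty_subset I0)
        · exact hne2
      have hpickex : ∀ I ∈ t, ∃ v ∈ J, v ∉ I := fun I hI =>
        Set.not_subset.mp (hJ1 I (htI hI))
      set pick : Set V → V := fun I =>
        if hex : ∃ v ∈ J, v ∉ I then hex.choose else Classical.arbitrary V with hpickdef
      have hpickspec : ∀ I ∈ t, pick I ∈ J ∧ pick I ∉ I := by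
        intro I hI
        have hex := hpickex I hI
        rw [hpickdef]
        simp only [dif_pos hex]
        exact ⟨hex.choose_spec.1, hex.choose_spec.2⟩
      set H : V → (∀ v, X v) → ℝ := fun w x =>
        ∏ I ∈ t.filter (fun I => pick I = w), Set.indicator (A I) (fun _ => (1:ℝ)) x with hH
      have hHm : ∀ w, Measurable (H w) := fun w =>
        Finset.measurable_prod _ fun I hI =>
          measurable_const.indicator (cylAlg_le X I _ (hAmeas I (Finset.mem_of_mem_filter I hI)))
      have hH1 : ∀ w x, |H w x| ≤ 1 := fun w x => by
        rw [hH]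
        have hp := abs_prod_le (t.filter fun I => pick I = w)
          (fun I => Set.indicator (A I) (fun _ => (1:ℝ)) x) (C := 1) zero_le_one
          (fun I _ => by by_cases hx : x ∈ A I <;> simp [Set.indicator_apply, hx])
        simpa using hp
      have hHdep : ∀ w x y, (∀ v, v ≠ w → x v = y v) → H w x = H w y := by
        intro w x y hxy
        rw [hH]
        refine Finset.prod_congr rfl fun I hI => ?_
        obtain ⟨hIt, hIp⟩ := Finset.mem_filter.mp hI
        have hwI : w ∉ I := by
          have hq := (hpickspec I hIt).2
          rwa [hIp] at hq
        have hmemiff : x ∈ A I ↔ y ∈ A I :=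
          cylAlg_mem_iff X (hAmeas I hIt) x y fun v hv =>
            hxy v (fun hvw => hwI (hvw ▸ hv))
        by_cases hx : x ∈ A I
        · rw [Set.indicator_of_mem hx, Set.indicator_of_mem (hmemiff.mp hx)]
        · rw [Set.indicator_of_notMem hx,
            Set.indicator_of_notMem fun hy => hx (hmemiff.mpr hy)]
      have hHχ : ∀ x, (∏ w ∈ J.toFinset, H w x) = χ x := by
        intro x
        rw [hH]
        rw [Finset.prod_fiberwise_of_maps_to
          (fun I hI => Set.mem_toFinset.mpr (hpickspec I hI).1)
          (fun I => Set.indicator (A I) (fun _ => (1:ℝ)) x)]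
        by_cases hx : x ∈ P
        · rw [hχ, Set.indicator_of_mem hx]
          refine Finset.prod_eq_one fun I hI => ?_
          have hxI : x ∈ A I := by
            have hx' := hx
            rw [hPdef] at hx'
            exact Set.mem_iInter₂.mp hx' I hI
          simp [Set.indicator_of_mem hxI]
        · obtain ⟨I0, hI0t, hI0⟩ : ∃ I ∈ t, x ∉ A I := by
            by_contra hcc
            push_neg at hcc
            exact hx (hPdef ▸ Set.mem_iInter₂.mpr hcc)
          rw [hχ, Set.indicator_of_notMem hx]
          exact Finset.prod_eq_zero hI0t (by simp [Set.indicator_of_notMem hI0])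
      have hgcs := gcs X μ J hg0m hC0 H hHm hH1 hHdep
      have hIgeq : ∫ x, g0 x * ∏ w ∈ J.toFinset, H w x ∂(Measure.pi μ)
          = ∫ x, g0 x * χ x ∂(Measure.pi μ) :=
        integral_congr_ae (Filter.Eventually.of_forall fun x => by
          show g0 x * (∏ w ∈ J.toFinset, H w x) = g0 x * χ x
          rw [hHχ x])
      rw [hIgeq] at hgcs
      have hDnn : 0 ≤ Dint X μ J g0 := Dint_nonneg X μ J hJne2 hg0m hC0
      have habs : |Dint X μ J g0| = Dint X μ J g0 := abs_of_nonneg hDnn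
      rw [habs] at hgcs
      refine ⟨hgcs, ?_⟩
      rw [UJnorm, UJint_eq_Dint X μ J hg0m]
      have hcast : ((2 ^ J.ncard : ℕ) : ℝ) = (2:ℝ) ^ J.ncard := by push_cast; rfl
      rw [← Real.rpow_natCast (Dint X μ J g0 ^ ((1:ℝ) / 2 ^ J.ncard)) (2 ^ J.ncard),
        ← Real.rpow_mul hDnn, hcast, one_div, inv_mul_cancel₀ (by positivity), Real.rpow_one]
    have hprodle : a ^ k ≤ ∏ J ∈ 𝓙, UJnorm X μ J g0 ^ 2 ^ J.ncard := by
      rw [hk, ← Finset.prod_pow_eq_pow_sum]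
      refine Finset.prod_le_prod (fun J _ => pow_nonneg ha0 _) fun J hJ => ?_
      rw [(hJfact J hJ).2]
      exact (hJfact J hJ).1
    have hstep := Real.rpow_le_rpow (pow_nonneg ha0 k) hprodle
      (le_of_lt (by positivity : (0:ℝ) < 1 / c))
    calc a = (a ^ k) ^ ((1:ℝ) / c) := by
          rw [← Real.rpow_natCast a k, ← Real.rpow_mul ha0, hkc, mul_one_div,
            div_self (ne_of_gt hcpos), Real.rpow_one]
      _ ≤ _ := hstep
  unfold UFamNorm
  refine lt_of_lt_of_le hηpos (le_csInf ?_ ?_)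
  · exact ⟨_, 0, fun _ => f, fun i => ⟨⟨C, hC⟩, hfm⟩, fun x => by simp, rfl⟩
  · rintro r ⟨m, g, hgprop, hsum, rfl⟩
    rw [← hc]
    have hint : ∀ i ∈ Finset.range (m+1), Integrable (fun x => g i x * χ x) (Measure.pi μ) := by
      intro i _
      obtain ⟨⟨Ci, hCi⟩, hgim⟩ := hgprop i
      refine integrable_of_bdd (hgim.mul hχm) (C := Ci * 1) fun x => ?_
      rw [abs_mul]
      exact mul_le_mul (hCi x) (hχ1 x) (abs_nonneg _)
        (le_trans (abs_nonneg _) (hCi (Classical.arbitrary _)))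
    calc η = |∑ i ∈ Finset.range (m+1), ∫ x, g i x * χ x ∂(Measure.pi μ)| := by
          rw [hη]
          congr 1
          rw [← integral_finset_sum _ hint]
          refine integral_congr_ae (Filter.Eventually.of_forall fun x => ?_)
          show f x * χ x = ∑ i ∈ Finset.range (m + 1), g i x * χ x
          rw [← Finset.sum_mul, ← hsum x]
      _ ≤ ∑ i ∈ Finset.range (m+1), |∫ x, g i x * χ x ∂(Measure.pi μ)| :=
          Finset.abs_sum_le_sum_abs _ _
      _ ≤ ∑ i ∈ Finset.range (m+1),
            (∏ J ∈ 𝓙, UJnorm X μ J (g i) ^ 2 ^ J.ncard) ^ ((1:ℝ) / c) := by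
          refine Finset.sum_le_sum fun i _ => ?_
          obtain ⟨⟨Ci, hCi⟩, hgim⟩ := hgprop i
          exact hkey (g i) hgim ⟨Ci, hCi⟩

end
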